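/- Let k be a field with char k ≠ 2, λ ∈ k with λ ≠ 0, 1, and S = k[X₁,X₂,X₃,X₄]/(X₃² − X₂² − X₁², X₄² − X₂² − λX₁²), graded by the group 𝕃 via deg xᵢ = xᵢ. For x ∈ 𝕃 with normal form x = l₁x₁ + l₂x₂ + l₃x₃ + l₄x₄ + l·c (lᵢ ∈ {0,1}, l ∈ ℤ), the k-dimension of the homogeneous component S_x equals l + 1 if l ≥ 0, and S_x = 0 if l < 0. In particular dim_k S_{xᵢ} = 1 for each i and dim_k S_c = 2. -/

import Mathlib

/-- The subgroup of relations `2e₁ = 2e₂ = 2e₃ = 2e₄` in `ℤ⁴`. -/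
def Lrel : AddSubgroup (Fin 4 → ℤ) :=
  AddSubgroup.closure
    { (2 : ℤ) • Pi.single (0 : Fin 4) (1 : ℤ) - (2 : ℤ) • Pi.single 1 1,
      (2 : ℤ) • Pi.single (0 : Fin 4) (1 : ℤ) - (2 : ℤ) • Pi.single 2 1,
      (2 : ℤ) • Pi.single (0 : Fin 4) (1 : ℤ) - (2 : ℤ) • Pi.single 3 1 }

/-- The group `𝕃` of type `(2,2,2,2)`. -/
abbrev Lgrp : Type := (Fin 4 → ℤ) ⧸ Lrel

/-- The generators `x₁, x₂, x₃, x₄` of `𝕃`. -/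
def xL (i : Fin 4) : Lgrp := QuotientAddGroup.mk (Pi.single i 1)

/-- The canonical element `c = 2x₁`. -/
def cL : Lgrp := (2 : ℤ) • xL 0

/-- generators of the relation subgroup -/
def gRel (i : Fin 4) : Fin 4 → ℤ := (2 : ℤ) • Pi.single 0 1 - (2 : ℤ) • Pi.single i 1

lemma gRel_mem (i : Fin 4) : gRel i ∈ Lrel := by
  fin_cases i
  · simpa [gRel] using Lrel.zero_mem
  · exact AddSubgroup.subset_closure (by left; rfl)
  · exact AddSubgroup.subset_closure (by right; left; rfl)
  · exact AddSubgroup.subset_closure (by right; right; rfl)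

def mkL : (Fin 4 → ℤ) →+ Lgrp := QuotientAddGroup.mk' Lrel

lemma mkL_eq_mkL {v w : Fin 4 → ℤ} (h : v - w ∈ Lrel) : mkL v = mkL w := by
  exact (QuotientAddGroup.eq_iff_sub_mem).2 h

lemma xL_eq (i : Fin 4) : xL i = mkL (Pi.single i 1) := rfl

lemma sum_single_fin4 (v : Fin 4 → ℤ) : ∑ i, v i • Pi.single i (1 : ℤ) = v := by
  funext j
  rw [Finset.sum_apply]
  simp [Pi.single_apply]

lemma mdeg_mk (a : Fin 4 →₀ ℕ) : (∑ i, (a i : ℤ) • xL i) = mkL (fun i => (a i : ℤ)) := by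
  simp only [xL_eq, ← map_zsmul, ← map_sum]
  congr 1
  exact sum_single_fin4 _

/-- The invariant map: total degree and coordinatewise parities. -/
def phiA : (Fin 4 → ℤ) →+ ℤ × (Fin 4 → ZMod 2) where
  toFun v := (∑ i, v i, fun i => ((v i : ℤ) : ZMod 2))
  map_zero' := by
    refine Prod.ext (by simp) ?_
    funext i; simp
  map_add' v w := by
    refine Prod.ext (by simp [Finset.sum_add_distrib]) ?_
    funext i; push_cast; simp

lemma phiA_gRel (i : Fin 4) : phiA (gRel i) = 0 := by
  refine Prod.ext ?_ ?_
  · show (∑ j, gRel i j) = 0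
    fin_cases i <;> simp [gRel, Fin.sum_univ_four, Pi.single_apply]
  · show (fun j => ((gRel i j : ℤ) : ZMod 2)) = 0
    funext j
    fin_cases i <;> fin_cases j <;> simp [gRel, Pi.single_apply] <;> decide

lemma Lrel_le_ker : Lrel ≤ phiA.ker := by
  rw [Lrel]
  rw [AddSubgroup.closure_le]
  rintro v (rfl | rfl | rfl)
  · exact phiA_gRel 1
  · exact phiA_gRel 2
  · exact phiA_gRel 3

def phiL : Lgrp →+ ℤ × (Fin 4 → ZMod 2) :=
  QuotientAddGroup.lift Lrel phiA (fun v hv => Lrel_le_ker hv)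

lemma phiL_mkL (v : Fin 4 → ℤ) : phiL (mkL v) = phiA v := rfl

lemma x_as_mk (l : Fin 4 → ℤ) (m : ℤ) :
    (∑ i, l i • xL i + m • cL) = mkL (l + (2 * m) • Pi.single 0 1) := by
  have h1 : ∑ i, l i • xL i = mkL l := by
    simp only [xL_eq, ← map_zsmul, ← map_sum]
    congr 1
    exact sum_single_fin4 l
  have h2 : m • cL = mkL ((2 * m) • Pi.single 0 1) := by
    show m • ((2 : ℤ) • xL 0) = _
    rw [smul_smul, xL_eq, ← map_zsmul]
    congr 1
    rw [mul_comm]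
  rw [h1, h2, ← map_add]

lemma constraints (l : Fin 4 → ℤ) (m : ℤ) (hl : ∀ i, l i = 0 ∨ l i = 1)
    (a : Fin 4 →₀ ℕ)
    (hdeg : mkL (fun i => (a i : ℤ)) = mkL (l + (2 * m) • Pi.single 0 1)) :
    (∀ i, (a i : ℤ) = l i + 2 * (a i / 2 : ℕ)) ∧
      ((a 0 / 2 : ℕ) + (a 1 / 2 : ℕ) + (a 2 / 2 : ℕ) + (a 3 / 2 : ℕ) : ℤ) = m := by
  have hphi := congrArg phiL hdeg
  rw [phiL_mkL, phiL_mkL] at hphi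
  set w : Fin 4 → ℤ := l + (2 * m) • Pi.single 0 1 with hwdef
  have hsum : (∑ i, ((a i : ℤ))) = ∑ i, w i :=
    congrArg Prod.fst hphi
  have hpar : ∀ i : Fin 4, ((a i : ℤ) : ZMod 2) = ((w i : ℤ) : ZMod 2) :=
    fun i => congrFun (congrArg Prod.snd hphi) i
  -- simplify parity
  have hpar' : ∀ i : Fin 4, ((a i : ℕ) : ZMod 2) = (((l i).toNat : ℕ) : ZMod 2) := by
    intro i
    have h := hpar i
    have hli : ((l i).toNat : ℤ) = l i := Int.toNat_of_nonneg (by rcases hl i with h' | h' <;> omega)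
    rw [hwdef, Pi.add_apply, Pi.smul_apply, smul_eq_mul] at h
    have h2 : ((a i : ℤ) : ZMod 2) = ((l i : ℤ) : ZMod 2) := by
      rw [h]
      push_cast
      rw [show ((2 : ZMod 2)) = 0 from rfl]
      ring
    calc ((a i : ℕ) : ZMod 2) = ((a i : ℤ) : ZMod 2) := by rw [Int.cast_natCast]
      _ = ((l i : ℤ) : ZMod 2) := h2
      _ = (((l i).toNat : ℕ) : ZMod 2) := by
          conv_lhs => rw [← hli]
          rw [Int.cast_natCast]
  have key : ∀ i, (a i : ℤ) = l i + 2 * (a i / 2 : ℕ) := by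
    intro i
    have hmod : a i % 2 = (l i).toNat := by
      have := (ZMod.natCast_eq_natCast_iff' (a i) ((l i).toNat) 2).1 (hpar' i)
      rcases hl i with h' | h' <;> simp [h'] at this ⊢ <;> omega
    have hdm := Nat.div_add_mod (a i) 2
    have hli : ((l i).toNat : ℤ) = l i := Int.toNat_of_nonneg (by rcases hl i with h' | h' <;> omega)
    omega
  refine ⟨key, ?_⟩
  have hw : ∑ i, w i = (l 0 + l 1 + l 2 + l 3) + 2 * m := by
    simp [hwdef, Fin.sum_univ_four, Pi.single_apply]
    ring
  rw [hw, Fin.sum_univ_four] at hsum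
  have h0 := key 0; have h1 := key 1; have h2 := key 2; have h3 := key 3
  omega

noncomputable def specA (l : Fin 4 → ℤ) (M j : ℕ) : Fin 4 →₀ ℕ :=
  Finsupp.equivFunOnFinite.symm
    ![(l 0).toNat + 2 * j, (l 1).toNat + 2 * (M - j), (l 2).toNat, (l 3).toNat]

lemma specA_apply (l : Fin 4 → ℤ) (M j : ℕ) (i : Fin 4) :
    specA l M j i = ![(l 0).toNat + 2 * j, (l 1).toNat + 2 * (M - j), (l 2).toNat,
      (l 3).toNat] i := rfl

lemma mdeg_specA (l : Fin 4 → ℤ) (hl : ∀ i, l i = 0 ∨ l i = 1) (m : ℤ) (hm : 0 ≤ m)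
    (j : ℕ) (hj : j ≤ m.toNat) :
    mkL (fun i => (specA l m.toNat j i : ℤ)) = mkL (l + (2 * m) • Pi.single 0 1) := by
  apply mkL_eq_mkL
  have hM : ((m.toNat : ℤ)) = m := Int.toNat_of_nonneg hm
  have hl0 : ((l 0).toNat : ℤ) = l 0 := Int.toNat_of_nonneg (by rcases hl 0 with h | h <;> omega)
  have hl1 : ((l 1).toNat : ℤ) = l 1 := Int.toNat_of_nonneg (by rcases hl 1 with h | h <;> omega)
  have hl2 : ((l 2).toNat : ℤ) = l 2 := Int.toNat_of_nonneg (by rcases hl 2 with h | h <;> omega)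
  have hl3 : ((l 3).toNat : ℤ) = l 3 := Int.toNat_of_nonneg (by rcases hl 3 with h | h <;> omega)
  have : (fun i => (specA l m.toNat j i : ℤ)) - (l + (2 * m) • Pi.single 0 1)
      = ((j : ℤ) - m.toNat) • gRel 1 := by
    funext i
    fin_cases i <;>
      simp [specA_apply, gRel, Pi.single_apply, Matrix.cons_val_zero, Matrix.cons_val_one] <;>
      push_cast [Nat.cast_sub hj] <;> omega
  rw [this]
  exact Lrel.zsmul_mem (gRel_mem 1) _

lemma mdeg_step (b : Fin 4 →₀ ℕ) (p q : Fin 4) :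
    mkL (fun i => ((b + Finsupp.single p 2 : Fin 4 →₀ ℕ) i : ℤ)) =
      mkL (fun i => ((b + Finsupp.single q 2 : Fin 4 →₀ ℕ) i : ℤ)) := by
  apply mkL_eq_mkL
  have : (fun i => ((b + Finsupp.single p 2 : Fin 4 →₀ ℕ) i : ℤ)) -
      (fun i => ((b + Finsupp.single q 2 : Fin 4 →₀ ℕ) i : ℤ)) = gRel q - gRel p := by
    funext i
    simp only [Pi.sub_apply, Finsupp.add_apply, Finsupp.single_apply, gRel, Pi.smul_apply,
      Pi.single_apply, smul_eq_mul]
    push_cast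
    split_ifs <;> omega
  rw [this]
  exact Lrel.sub_mem (gRel_mem q) (gRel_mem p)

open MvPolynomial

/-- The defining ideal `(X₃² − X₂² − X₁², X₄² − X₂² − λX₁²)`. -/
noncomputable def relIdeal (k : Type*) [Field k] (lam : k) : Ideal (MvPolynomial (Fin 4) k) :=
  Ideal.span
    {(X 2 : MvPolynomial (Fin 4) k) ^ 2 - X 1 ^ 2 - X 0 ^ 2,
     (X 3 : MvPolynomial (Fin 4) k) ^ 2 - X 1 ^ 2 - C lam * X 0 ^ 2}

/-- The homogeneous coordinate algebra `S` of the weighted projective line of type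
`(2,2,2,2;λ)`. -/
abbrev Sring (k : Type*) [Field k] (lam : k) : Type _ :=
  MvPolynomial (Fin 4) k ⧸ relIdeal k lam

/-- The `𝕃`-degree of a monomial exponent `a ∈ ℕ⁴`, namely `Σᵢ aᵢ·xᵢ`. -/
noncomputable def mdeg (a : Fin 4 →₀ ℕ) : Lgrp := ∑ i, (a i : ℤ) • xL i

/-- The homogeneous component `S_x ⊆ S` of degree `x ∈ 𝕃`: the `k`-span of the images in `S`
of the monomials of `𝕃`-degree `x`. -/
noncomputable def Sx (k : Type*) [Field k] (lam : k) (x : Lgrp) : Submodule k (Sring k lam) :=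
  Submodule.span k (Ideal.Quotient.mk (relIdeal k lam) ''
    { m | ∃ a : Fin 4 →₀ ℕ, mdeg a = x ∧ m = monomial a (1 : k) })

section Ring
variable {k : Type*} [Field k] {lam : k}

lemma rel2_mem : ((X 2 : MvPolynomial (Fin 4) k) ^ 2 - X 1 ^ 2 - X 0 ^ 2) ∈ relIdeal k lam :=
  Ideal.subset_span (by left; rfl)

lemma rel3_mem : ((X 3 : MvPolynomial (Fin 4) k) ^ 2 - X 1 ^ 2 - C lam * X 0 ^ 2) ∈ relIdeal k lam :=
  Ideal.subset_span (by right; rfl)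

lemma red2 (b : Fin 4 →₀ ℕ) :
    Ideal.Quotient.mk (relIdeal k lam) (monomial (b + Finsupp.single 2 2) (1 : k)) =
      Ideal.Quotient.mk (relIdeal k lam) (monomial (b + Finsupp.single 1 2) 1) +
        Ideal.Quotient.mk (relIdeal k lam) (monomial (b + Finsupp.single 0 2) 1) := by
  have hz : Ideal.Quotient.mk (relIdeal k lam) ((X 2 : MvPolynomial (Fin 4) k) ^ 2 - X 1 ^ 2 - X 0 ^ 2) = 0 :=
    Ideal.Quotient.eq_zero_iff_mem.2 rel2_mem
  have key : (monomial (b + Finsupp.single 2 2) (1 : k)) =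
      monomial b 1 * ((X 2 : MvPolynomial (Fin 4) k) ^ 2 - X 1 ^ 2 - X 0 ^ 2) +
        monomial (b + Finsupp.single 1 2) 1 + monomial (b + Finsupp.single 0 2) 1 := by
    rw [mul_sub, mul_sub, X_pow_eq_monomial, X_pow_eq_monomial, X_pow_eq_monomial,
      monomial_mul, monomial_mul, monomial_mul]
    simp only [mul_one]
    ring
  rw [key, RingHom.map_add, RingHom.map_add, RingHom.map_mul, hz, mul_zero, zero_add]

lemma red3 (b : Fin 4 →₀ ℕ) :
    Ideal.Quotient.mk (relIdeal k lam) (monomial (b + Finsupp.single 3 2) (1 : k)) =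
      Ideal.Quotient.mk (relIdeal k lam) (monomial (b + Finsupp.single 1 2) 1) +
        lam • Ideal.Quotient.mk (relIdeal k lam) (monomial (b + Finsupp.single 0 2) 1) := by
  have hz : Ideal.Quotient.mk (relIdeal k lam)
      ((X 3 : MvPolynomial (Fin 4) k) ^ 2 - X 1 ^ 2 - C lam * X 0 ^ 2) = 0 :=
    Ideal.Quotient.eq_zero_iff_mem.2 rel3_mem
  have key : (monomial (b + Finsupp.single 3 2) (1 : k)) =
      monomial b 1 * ((X 3 : MvPolynomial (Fin 4) k) ^ 2 - X 1 ^ 2 - C lam * X 0 ^ 2) +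
        monomial (b + Finsupp.single 1 2) 1 + lam • monomial (b + Finsupp.single 0 2) 1 := by
    rw [mul_sub, mul_sub, X_pow_eq_monomial, X_pow_eq_monomial, X_pow_eq_monomial,
      monomial_mul, monomial_mul]
    rw [show (monomial b (1:k)) * (C lam * monomial (Finsupp.single 0 2) 1)
        = monomial (b + Finsupp.single 0 2) lam by
      rw [mul_comm (C lam), ← mul_assoc, monomial_mul, mul_comm _ (C lam), C_mul_monomial]
      simp]
    rw [smul_monomial]
    simp only [mul_one, smul_eq_mul]
    ring
  rw [key, RingHom.map_add, RingHom.map_add, RingHom.map_mul, hz, mul_zero, zero_add]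
  rfl

lemma decomp (a : Fin 4 →₀ ℕ) (p : Fin 4) (h : 2 ≤ a p) :
    a = (a - Finsupp.single p 2) + Finsupp.single p 2 := by
  ext i
  simp only [Finsupp.add_apply, Finsupp.tsub_apply, Finsupp.single_apply]
  split_ifs with hh
  · subst hh; omega
  · omega

end Ring

section Indep
variable (k : Type*) [Field k] (lam : k)

noncomputable def pol1 : Polynomial (MvPolynomial (Fin 2) k) :=
  Polynomial.X ^ 2 - Polynomial.C (X 1 ^ 2 + X 0 ^ 2)

lemma pol1_monic : (pol1 k).Monic := Polynomial.monic_X_pow_sub_C _ (by norm_num)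

abbrev Bone := AdjoinRoot (pol1 k)

noncomputable def pol2 : Polynomial (Bone k) :=
  Polynomial.X ^ 2 - Polynomial.C (algebraMap (MvPolynomial (Fin 2) k) (Bone k)
    (X 1 ^ 2 + C lam * X 0 ^ 2))

lemma pol2_monic : (pol2 k lam).Monic := Polynomial.monic_X_pow_sub_C _ (by norm_num)

abbrev Btwo := AdjoinRoot (pol2 k lam)

noncomputable def rr1 : Btwo k lam := algebraMap (Bone k) _ (AdjoinRoot.root (pol1 k))
noncomputable def rr2 : Btwo k lam := AdjoinRoot.root (pol2 k lam)
noncomputable def uu : Btwo k lam := algebraMap (MvPolynomial (Fin 2) k) _ (X 0)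
noncomputable def vv : Btwo k lam := algebraMap (MvPolynomial (Fin 2) k) _ (X 1)

lemma rr1_sq : (rr1 k lam) ^ 2 = (vv k lam) ^ 2 + (uu k lam) ^ 2 := by
  have h0 : (AdjoinRoot.root (pol1 k)) ^ 2
      = algebraMap (MvPolynomial (Fin 2) k) (Bone k) (X 1 ^ 2 + X 0 ^ 2) := by
    have := AdjoinRoot.mk_self (f := pol1 k)
    rw [← AdjoinRoot.aeval_eq, pol1, map_sub, map_pow, Polynomial.aeval_X,
      Polynomial.aeval_C, sub_eq_zero] at this
    exact this
  rw [rr1, ← map_pow, h0, uu, vv,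
    IsScalarTower.algebraMap_apply (MvPolynomial (Fin 2) k) (Bone k) (Btwo k lam) (X 0),
    IsScalarTower.algebraMap_apply (MvPolynomial (Fin 2) k) (Bone k) (Btwo k lam) (X 1)]
  simp only [← map_pow, ← map_add]

lemma rr2_sq : (rr2 k lam) ^ 2 = (vv k lam) ^ 2 + algebraMap k _ lam * (uu k lam) ^ 2 := by
  have h0 : (AdjoinRoot.root (pol2 k lam)) ^ 2
      = algebraMap (Bone k) (Btwo k lam)
          (algebraMap (MvPolynomial (Fin 2) k) (Bone k) (X 1 ^ 2 + C lam * X 0 ^ 2)) := by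
    have := AdjoinRoot.mk_self (f := pol2 k lam)
    rw [← AdjoinRoot.aeval_eq, pol2, map_sub, map_pow, Polynomial.aeval_X,
      Polynomial.aeval_C, sub_eq_zero] at this
    exact this
  rw [rr2, h0, ← IsScalarTower.algebraMap_apply (MvPolynomial (Fin 2) k) (Bone k) (Btwo k lam),
    map_add, map_mul, map_pow, map_pow, uu, vv]
  have hc : algebraMap (MvPolynomial (Fin 2) k) (Btwo k lam) (C lam) = algebraMap k _ lam := by
    rw [show (C lam : MvPolynomial (Fin 2) k) = algebraMap k (MvPolynomial (Fin 2) k) lam from rfl,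
      ← IsScalarTower.algebraMap_apply k (MvPolynomial (Fin 2) k) (Btwo k lam)]
  rw [hc]

noncomputable def psi0 : MvPolynomial (Fin 4) k →ₐ[k] Btwo k lam :=
  aeval ![uu k lam, vv k lam, rr1 k lam, rr2 k lam]

lemma psi0_rel2 : psi0 k lam ((X 2 : MvPolynomial (Fin 4) k) ^ 2 - X 1 ^ 2 - X 0 ^ 2) = 0 := by
  rw [psi0, map_sub, map_sub, map_pow, map_pow, map_pow, aeval_X, aeval_X, aeval_X]
  simp only [Matrix.cons_val_zero, Matrix.cons_val_one, Matrix.head_cons,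
    Matrix.cons_val_two, Matrix.tail_cons]
  rw [rr1_sq]
  ring

lemma psi0_rel3 : psi0 k lam ((X 3 : MvPolynomial (Fin 4) k) ^ 2 - X 1 ^ 2 - C lam * X 0 ^ 2) = 0 := by
  rw [psi0, map_sub, map_sub, map_pow, map_pow, map_mul, map_pow, aeval_X, aeval_X, aeval_X,
    aeval_C]
  simp only [Matrix.cons_val_zero, Matrix.cons_val_one, Matrix.head_cons,
    Matrix.cons_val_three, Matrix.tail_cons]
  rw [rr2_sq]
  ring

noncomputable def psi : Sring k lam →ₐ[k] Btwo k lam :=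
  Ideal.Quotient.liftₐ (relIdeal k lam) (psi0 k lam) (by
    intro a ha
    rw [relIdeal] at ha
    have hle : Ideal.span {(X 2 : MvPolynomial (Fin 4) k) ^ 2 - X 1 ^ 2 - X 0 ^ 2,
        (X 3 : MvPolynomial (Fin 4) k) ^ 2 - X 1 ^ 2 - C lam * X 0 ^ 2}
        ≤ RingHom.ker (psi0 k lam).toRingHom := by
      rw [Ideal.span_le]
      rintro p (rfl | rfl)
      · exact psi0_rel2 k lam
      · exact psi0_rel3 k lam
    exact (RingHom.mem_ker).1 (hle ha))

lemma psi_mk (p : MvPolynomial (Fin 4) k) :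
    psi k lam (Ideal.Quotient.mk (relIdeal k lam) p) = psi0 k lam p := by
  rfl

noncomputable def pb1 : PowerBasis (MvPolynomial (Fin 2) k) (Bone k) :=
  AdjoinRoot.powerBasis' (pol1_monic k)

noncomputable def pb2 : PowerBasis (Bone k) (Btwo k lam) :=
  AdjoinRoot.powerBasis' (pol2_monic k lam)

instance : Nontrivial (Bone k) :=
  AdjoinRoot.nontrivial _ (by
    rw [pol1, Polynomial.degree_X_pow_sub_C (by norm_num : 0 < 2)]
    decide)

lemma pb1_gen : (pb1 k).gen = AdjoinRoot.root (pol1 k) := rfl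
lemma pb2_gen : (pb2 k lam).gen = AdjoinRoot.root (pol2 k lam) := rfl

lemma pb1_dim : (pb1 k).dim = 2 := by
  show (pol1 k).natDegree = 2
  rw [pol1, Polynomial.natDegree_X_pow_sub_C]

lemma pb2_dim : (pb2 k lam).dim = 2 := by
  show (pol2 k lam).natDegree = 2
  rw [pol2, Polynomial.natDegree_X_pow_sub_C]

noncomputable def bB :
    Module.Basis (((Fin 2 →₀ ℕ) × Fin (pb1 k).dim) × Fin (pb2 k lam).dim) k (Btwo k lam) :=
  ((MvPolynomial.basisMonomials (Fin 2) k).smulTower (pb1 k).basis).smulTower (pb2 k lam).basis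

lemma bB_apply (d : Fin 2 →₀ ℕ) (i : Fin (pb1 k).dim) (j : Fin (pb2 k lam).dim) :
    bB k lam ((d, i), j) = algebraMap (MvPolynomial (Fin 2) k) (Btwo k lam) (monomial d 1)
      * algebraMap (Bone k) (Btwo k lam) ((AdjoinRoot.root (pol1 k)) ^ (i : ℕ))
      * (AdjoinRoot.root (pol2 k lam)) ^ (j : ℕ) := by
  rw [bB, Module.Basis.smulTower_apply, Module.Basis.smulTower_apply]
  rw [PowerBasis.basis_eq_pow, PowerBasis.basis_eq_pow]
  rw [MvPolynomial.coe_basisMonomials]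
  rw [Algebra.smul_def, Algebra.smul_def, map_mul]
  rw [IsScalarTower.algebraMap_apply (MvPolynomial (Fin 2) k) (Bone k) (Btwo k lam)]
  rw [pb1_gen, pb2_gen]

lemma psi0_monomial (a : Fin 4 →₀ ℕ) :
    psi0 k lam (monomial a (1 : k)) =
      uu k lam ^ (a 0) * vv k lam ^ (a 1) * rr1 k lam ^ (a 2) * rr2 k lam ^ (a 3) := by
  rw [psi0, aeval_monomial, map_one, one_mul]
  rw [Finsupp.prod_fintype _ _ (fun i => pow_zero _)]
  rw [Fin.prod_univ_four]
  simp only [Matrix.cons_val_zero, Matrix.cons_val_one, Matrix.head_cons, Matrix.cons_val_two,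
    Matrix.tail_cons, Matrix.cons_val_three]

lemma mono2 (α β : ℕ) :
    (monomial (Finsupp.equivFunOnFinite.symm ![α, β]) (1 : k) : MvPolynomial (Fin 2) k)
      = X 0 ^ α * X 1 ^ β := by
  have hs : (Finsupp.equivFunOnFinite.symm ![α, β] : Fin 2 →₀ ℕ)
      = Finsupp.single 0 α + Finsupp.single 1 β := by
    ext i
    fin_cases i <;> simp [Finsupp.single_apply]
  rw [hs, X_pow_eq_monomial, X_pow_eq_monomial, monomial_mul, mul_one]

lemma psi_spec (l : Fin 4 → ℤ) (M j : ℕ) (hj : (l 2).toNat < (pb1 k).dim)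
    (hj' : (l 3).toNat < (pb2 k lam).dim) :
    psi k lam (Ideal.Quotient.mk (relIdeal k lam) (monomial (specA l M j) (1 : k)))
      = bB k lam ((Finsupp.equivFunOnFinite.symm ![(l 0).toNat + 2 * j,
          (l 1).toNat + 2 * (M - j)], ⟨(l 2).toNat, hj⟩), ⟨(l 3).toNat, hj'⟩) := by
  rw [psi_mk, psi0_monomial, bB_apply, mono2]
  simp only [specA_apply, Matrix.cons_val_zero, Matrix.cons_val_one, Matrix.head_cons,
    Matrix.cons_val_two, Matrix.tail_cons, Matrix.cons_val_three]
  rw [map_mul, map_pow, map_pow, map_pow]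
  rw [uu, vv, rr1, rr2]

lemma indep_spec (l : Fin 4 → ℤ) (hl : ∀ i, l i = 0 ∨ l i = 1) (M : ℕ) :
    LinearIndependent k (fun j : Fin (M + 1) =>
      Ideal.Quotient.mk (relIdeal k lam) (monomial (specA l M (j : ℕ)) (1 : k))) := by
  have h2 : (l 2).toNat < (pb1 k).dim := by
    rw [pb1_dim]; rcases hl 2 with h | h <;> simp [h]
  have h3 : (l 3).toNat < (pb2 k lam).dim := by
    rw [pb2_dim]; rcases hl 3 with h | h <;> simp [h]
  apply LinearIndependent.of_comp (psi k lam).toLinearMap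
  have hcomp : ((psi k lam).toLinearMap ∘ fun j : Fin (M + 1) =>
      Ideal.Quotient.mk (relIdeal k lam) (monomial (specA l M (j : ℕ)) (1 : k)))
      = fun j : Fin (M + 1) => bB k lam ((Finsupp.equivFunOnFinite.symm
          ![(l 0).toNat + 2 * (j : ℕ), (l 1).toNat + 2 * (M - (j : ℕ))],
          ⟨(l 2).toNat, h2⟩), ⟨(l 3).toNat, h3⟩) := by
    funext j
    exact psi_spec k lam l M j h2 h3
  rw [hcomp]
  apply (bB k lam).linearIndependent.comp
  intro j j' h
  have h0 : ((Finsupp.equivFunOnFinite.symm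
      ![(l 0).toNat + 2 * (j : ℕ), (l 1).toNat + 2 * (M - (j : ℕ))] : Fin 2 →₀ ℕ))
      = Finsupp.equivFunOnFinite.symm
        ![(l 0).toNat + 2 * (j' : ℕ), (l 1).toNat + 2 * (M - (j' : ℕ))] :=
    congrArg (fun p => p.1.1) h
  have h1 := DFunLike.congr_fun h0 (0 : Fin 2)
  simp only [Finsupp.coe_equivFunOnFinite_symm, Matrix.cons_val_zero] at h1
  exact Fin.ext (by omega)

end Indep

lemma mdeg_eq (a : Fin 4 →₀ ℕ) : mdeg a = mkL (fun i => (a i : ℤ)) := by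
  rw [mdeg]; exact mdeg_mk a

/-- For `x ∈ 𝕃` with normal form `x = Σᵢ lᵢxᵢ + l·c` (`lᵢ ∈ {0,1}`, `l ∈ ℤ`), the homogeneous
component `S_x` has `k`-dimension `l + 1` if `l ≥ 0` and vanishes if `l < 0`. In particular
`dim_k S_{xᵢ} = 1` and `dim_k S_c = 2`. -/
theorem dim_homogeneous_component (k : Type*) [Field k] (hchar : ringChar k ≠ 2)
    (lam : k) (h0 : lam ≠ 0) (h1 : lam ≠ 1)
    (l : Fin 4 → ℤ) (m : ℤ) (hl : ∀ i, l i = 0 ∨ l i = 1)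
    (x : Lgrp) (hx : x = ∑ i, l i • xL i + m • cL) :
    (0 ≤ m → Module.finrank k (Sx k lam x) = m.toNat + 1) ∧
    (m < 0 → Sx k lam x = ⊥) := by
  classical
  have hxw : x = mkL (l + (2 * m) • Pi.single 0 1) := by rw [hx, x_as_mk]
  constructor
  · intro hm
    set M := m.toNat with hM
    set fam : Fin (M + 1) → Sring k lam := fun j =>
      Ideal.Quotient.mk (relIdeal k lam) (monomial (specA l M (j : ℕ)) (1 : k)) with hfam
    have hind : LinearIndependent k fam := indep_spec k lam l hl M
    have hbase : ∀ a : Fin 4 →₀ ℕ, a 2 ≤ 1 → a 3 ≤ 1 → mdeg a = x →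
        Ideal.Quotient.mk (relIdeal k lam) (monomial a (1 : k))
          ∈ Submodule.span k (Set.range fam) := by
      intro a h2 h3 hdeg
      obtain ⟨key, hsum⟩ := constraints l m hl a (by rw [← mdeg_eq, hdeg, hxw])
      have k0 := key 0; have k1 := key 1; have k2 := key 2; have k3 := key 3
      have e0 : a 0 = (l 0).toNat + 2 * (a 0 / 2) := by omega
      have e1 : a 1 = (l 1).toNat + 2 * (M - a 0 / 2) := by omega
      have e2 : a 2 = (l 2).toNat := by omega
      have e3 : a 3 = (l 3).toNat := by omega
      have ha : a = specA l M (a 0 / 2) := by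
        ext i
        fin_cases i
        · simpa [specA_apply] using e0
        · simpa [specA_apply] using e1
        · simpa [specA_apply] using e2
        · simpa [specA_apply] using e3
      apply Submodule.subset_span
      exact ⟨⟨a 0 / 2, by omega⟩, by rw [hfam]; simp only; rw [← ha]⟩
    have hmono : ∀ N (a : Fin 4 →₀ ℕ), a 2 + a 3 ≤ N → mdeg a = x →
        Ideal.Quotient.mk (relIdeal k lam) (monomial a (1 : k))
          ∈ Submodule.span k (Set.range fam) := by
      intro N
      induction N with
      | zero => exact fun a hN hdeg => hbase a (by omega) (by omega) hdeg
      | succ N ih =>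
        intro a hN hdeg
        by_cases h2 : 2 ≤ a 2
        · have hb : a = (a - Finsupp.single 2 2) + Finsupp.single 2 2 := decomp a 2 h2
          set b := a - Finsupp.single 2 2 with hbdef
          have hb2 : b 2 = a 2 - 2 := by simp [hbdef, Finsupp.tsub_apply]
          have hb3 : b 3 = a 3 := by simp [hbdef, Finsupp.tsub_apply]
          have hdeg1 : mdeg (b + Finsupp.single 1 2) = x := by
            rw [mdeg_eq, mdeg_step b 1 2, ← mdeg_eq, ← hb, hdeg]
          have hdeg0 : mdeg (b + Finsupp.single 0 2) = x := by
            rw [mdeg_eq, mdeg_step b 0 2, ← mdeg_eq, ← hb, hdeg]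
          rw [hb, red2]
          apply Submodule.add_mem
          · exact ih (b + Finsupp.single 1 2)
              (by simp [Finsupp.add_apply, Finsupp.single_apply]; omega) hdeg1
          · exact ih (b + Finsupp.single 0 2)
              (by simp [Finsupp.add_apply, Finsupp.single_apply]; omega) hdeg0
        · by_cases h3 : 2 ≤ a 3
          · have hb : a = (a - Finsupp.single 3 2) + Finsupp.single 3 2 := decomp a 3 h3
            set b := a - Finsupp.single 3 2 with hbdef
            have hb2 : b 2 = a 2 := by simp [hbdef, Finsupp.tsub_apply]
            have hb3 : b 3 = a 3 - 2 := by simp [hbdef, Finsupp.tsub_apply]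
            have hdeg1 : mdeg (b + Finsupp.single 1 2) = x := by
              rw [mdeg_eq, mdeg_step b 1 3, ← mdeg_eq, ← hb, hdeg]
            have hdeg0 : mdeg (b + Finsupp.single 0 2) = x := by
              rw [mdeg_eq, mdeg_step b 0 3, ← mdeg_eq, ← hb, hdeg]
            rw [hb, red3]
            apply Submodule.add_mem
            · exact ih (b + Finsupp.single 1 2)
                (by simp [Finsupp.add_apply, Finsupp.single_apply]; omega) hdeg1
            · exact Submodule.smul_mem _ lam (ih (b + Finsupp.single 0 2)
                (by simp [Finsupp.add_apply, Finsupp.single_apply]; omega) hdeg0)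
          · exact hbase a (by omega) (by omega) hdeg
    have hSx : Sx k lam x = Submodule.span k (Set.range fam) := by
      apply le_antisymm
      · rw [Sx, Submodule.span_le]
        rintro _ ⟨p, ⟨a, hdeg, rfl⟩, rfl⟩
        exact hmono (a 2 + a 3) a le_rfl hdeg
      · rw [Submodule.span_le]
        rintro _ ⟨j, rfl⟩
        apply Submodule.subset_span
        refine ⟨monomial (specA l M (j : ℕ)) 1, ⟨specA l M (j : ℕ), ?_, rfl⟩, rfl⟩
        rw [mdeg_eq, hxw]
        exact mdeg_specA l hl m hm (j : ℕ) (by omega)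
    rw [hSx, finrank_span_eq_card hind, Fintype.card_fin]
  · intro hm
    have hempty : {p | ∃ a : Fin 4 →₀ ℕ, mdeg a = x ∧ p = monomial a (1 : k)}
        = (∅ : Set (MvPolynomial (Fin 4) k)) := by
      ext p
      simp only [Set.mem_setOf_eq, Set.mem_empty_iff_false, iff_false, not_exists]
      rintro a ⟨hdeg, rfl⟩
      obtain ⟨key, hsum⟩ := constraints l m hl a (by rw [← mdeg_eq, hdeg, hxw])
      omega
    rw [Sx, hempty, Set.image_empty, Submodule.span_empty]
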